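/- If finite nonempty sets r and s satisfy cosine similarity |r∩s|/√(|r|·|s|) ≥ τ_c with 0 < τ_c ≤ 1 (real-valued), then τ_c²·|r| ≤ |s| and |s| ≤ |r|/τ_c² (Length Filter bound for Cosine). -/

import Mathlib

theorem cosine_length_filter
    {α : Type*} [DecidableEq α] (r s : Finset α) (τc : ℝ)
    (hτ0 : 0 < τc) (hτ1 : τc ≤ 1) (hr : r.Nonempty) (hs : s.Nonempty)
    (hsim : ((r ∩ s).card : ℝ) / Real.sqrt ((r.card : ℝ) * (s.card : ℝ)) ≥ τc) :
    τc ^ 2 * (r.card : ℝ) ≤ (s.card : ℝ) ∧ (s.card : ℝ) ≤ (r.card : ℝ) / τc ^ 2 := by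
  set R : ℝ := (r.card : ℝ) with hR
  set S : ℝ := (s.card : ℝ) with hS
  set I : ℝ := ((r ∩ s).card : ℝ) with hI
  have hRpos : 0 < R := by rw [hR]; exact_mod_cast Finset.card_pos.mpr hr
  have hSpos : 0 < S := by rw [hS]; exact_mod_cast Finset.card_pos.mpr hs
  have hRSpos : 0 < R * S := mul_pos hRpos hSpos
  have hsqrt : 0 < Real.sqrt (R * S) := Real.sqrt_pos.mpr hRSpos
  have hkey : τc * Real.sqrt (R * S) ≤ I := by
    rw [ge_iff_le, le_div_iff₀ hsqrt] at hsim; exact hsim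
  have hIR : I ≤ R := by rw [hI, hR]; exact_mod_cast Finset.card_le_card (Finset.inter_subset_left)
  have hIS : I ≤ S := by rw [hI, hS]; exact_mod_cast Finset.card_le_card (Finset.inter_subset_right)
  have hsq : τc ^ 2 * (R * S) ≤ I ^ 2 := by
    have h1 : (τc * Real.sqrt (R * S)) ^ 2 ≤ I ^ 2 := by
      apply sq_le_sq' <;> nlinarith [hsqrt.le, hτ0.le, Real.sqrt_nonneg (R * S)]
    calc τc ^ 2 * (R * S) = (τc * Real.sqrt (R * S)) ^ 2 := by
          rw [mul_pow, Real.sq_sqrt hRSpos.le]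
      _ ≤ I ^ 2 := h1
  have hInn : 0 ≤ I := Nat.cast_nonneg _
  constructor
  · -- τc² R S ≤ I² ≤ S²  ⇒ τc² R ≤ S
    have : τc ^ 2 * (R * S) ≤ S ^ 2 := le_trans hsq (by nlinarith)
    have := (mul_le_mul_iff_of_pos_right hSpos).mp (by nlinarith : (τc ^ 2 * R) * S ≤ S * S)
    linarith
  · rw [le_div_iff₀ (by positivity)]
    have : τc ^ 2 * (R * S) ≤ R ^ 2 := le_trans hsq (by nlinarith)
    have := (mul_le_mul_iff_of_pos_right hRpos).mp (by nlinarith : (S * τc ^ 2) * R ≤ R * R)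
    linarith
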